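/- For the five-qubit trigonal bipyramid state |ψ₅⟩ = (|S_{5,1}⟩ + |S_{5,4}⟩)/√2, the maximal overlap with symmetric product states is max_σ |⟨ψ₅|σ^{⊗5}⟩|² = 5/16, so E_G(|ψ₅⟩) = log₂(16/5). -/

import Mathlib

set_option maxHeartbeats 2000000

open Finset

noncomputable def overlap {n : ℕ} (f g : (Fin n → Fin 2) → ℂ) : ℂ :=
  ∑ x : Fin n → Fin 2, (starRingEnd ℂ) (f x) * g x

noncomputable def symmPow (n : ℕ) (σ : Fin 2 → ℂ) : (Fin n → Fin 2) → ℂ :=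
  fun x => ∏ i, σ (x i)

noncomputable def prodState {n : ℕ} (σ : Fin n → Fin 2 → ℂ) : (Fin n → Fin 2) → ℂ :=
  fun x => ∏ j, σ j (x j)

def qubitUnit (σ : Fin 2 → ℂ) : Prop :=
  ‖σ 0‖ ^ 2 + ‖σ 1‖ ^ 2 = 1

noncomputable def dicke (n k : ℕ) : (Fin n → Fin 2) → ℂ :=
  fun x => if (∑ i, ((x i : ℕ))) = k then ((1 / Real.sqrt (n.choose k) : ℝ) : ℂ) else 0

noncomputable def bloch (θ ph : ℝ) : Fin 2 → ℂ :=
  fun i => if i = 0 then ((Real.cos (θ/2) : ℝ) : ℂ)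
           else Complex.exp (Complex.I * ph) * ((Real.sin (θ/2) : ℝ) : ℂ)

def isCPP (n : ℕ) (ψ : (Fin n → Fin 2) → ℂ) (σ : Fin 2 → ℂ) : Prop :=
  qubitUnit σ ∧ ∀ τ, qubitUnit τ →
    ‖overlap (symmPow n τ) ψ‖ ≤ ‖overlap (symmPow n σ) ψ‖

noncomputable def trigonalBipyramidState : (Fin 5 → Fin 2) → ℂ :=
  fun x => ((1 / Real.sqrt 2 : ℝ) : ℂ) * (dicke 5 1 x + dicke 5 4 x)

/-! ### Auxiliary lemmas -/

lemma tbp_pi_succ_sum {n : ℕ} (F : (Fin (n+1) → Fin 2) → ℂ) :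
    ∑ x : Fin (n+1) → Fin 2, F x = ∑ y : Fin 2, ∑ x : Fin n → Fin 2, F (Fin.cons y x) := by
  rw [← (Fin.consEquiv (fun _ : Fin (n+1) => Fin 2)).sum_comp, Fintype.sum_prod_type]
  rfl

lemma tbp_overlap_formula (σ : Fin 2 → ℂ) :
    overlap (symmPow 5 σ) trigonalBipyramidState =
      ((Real.sqrt 5 / Real.sqrt 2 : ℝ) : ℂ) *
        ((starRingEnd ℂ) (σ 0) ^ 4 * (starRingEnd ℂ) (σ 1)
          + (starRingEnd ℂ) (σ 0) * (starRingEnd ℂ) (σ 1) ^ 4) := by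
  rw [overlap, tbp_pi_succ_sum]
  simp only [tbp_pi_succ_sum]
  simp only [symmPow, trigonalBipyramidState, dicke, Fin.prod_univ_succ, Fin.sum_univ_succ,
    Fin.cons_zero, Fin.cons_succ, Fin.prod_univ_zero, Fin.sum_univ_zero,
    Finset.univ_unique, Finset.sum_const, Fin.sum_univ_two]
  norm_num
  have h5 : Real.sqrt 5 ≠ 0 := by positivity
  have h2 : Real.sqrt 2 ≠ 0 := by positivity
  field_simp
  ring_nf
  have h5' : ((Real.sqrt 5 : ℝ) : ℂ) ^ 2 = 5 := by
    rw [← Complex.ofReal_pow, Real.sq_sqrt (by norm_num : (5:ℝ) ≥ 0)]; norm_num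
  rw [h5']

lemma tbp_key (u : ℝ) (h0 : 0 ≤ u) (h1 : u ≤ 1/2) : u^2*(1+2*u)*(1-u)^2 ≤ 1/8 := by
  have h12 : (0:ℝ) ≤ 1 - 2*u := by linarith
  have h14 : (0:ℝ) ≤ 1 + 4*u := by linarith
  have hq : (0:ℝ) ≤ 2*u^2 - 2*u + 1 := by nlinarith [sq_nonneg (2*u-1)]
  nlinarith [mul_nonneg (mul_nonneg h12 h12) h14,
    mul_nonneg h12 (mul_nonneg (sq_nonneg u) hq)]

lemma tbp_key2 (A B : ℝ) (hA : 0 ≤ A) (hB : 0 ≤ B) (h : A^2 + B^2 = 1) :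
    (A^4*B + A*B^4)^2 ≤ 1/8 := by
  have hu : 0 ≤ A*B := mul_nonneg hA hB
  have h2u : A*B ≤ 1/2 := by nlinarith [sq_nonneg (A-B)]
  have hc : A^3+B^3 = (A+B)*(1-A*B) := by linear_combination (A+B)*h
  have hs : (A+B)^2 = 1+2*(A*B) := by linear_combination h
  have he : (A^4*B + A*B^4)^2 = (A*B)^2*((A+B)^2*(1-A*B)^2) := by
    have : (A^4*B + A*B^4)^2 = (A*B)^2*(A^3+B^3)^2 := by ring
    rw [this, hc]; ring
  rw [he, hs]
  linarith [tbp_key (A*B) hu h2u]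

lemma tbp_bound (σ : Fin 2 → ℂ) (hσ : qubitUnit σ) :
    ‖overlap (symmPow 5 σ) trigonalBipyramidState‖ ^ 2 ≤ 5 / 16 := by
  rw [tbp_overlap_formula, norm_mul, mul_pow]
  set A := ‖σ 0‖ with hA
  set B := ‖σ 1‖ with hB
  have hA0 : 0 ≤ A := norm_nonneg _
  have hB0 : 0 ≤ B := norm_nonneg _
  have hcoef : ‖((Real.sqrt 5 / Real.sqrt 2 : ℝ) : ℂ)‖ ^ 2 = 5/2 := by
    rw [Complex.norm_real, Real.norm_eq_abs, abs_of_nonneg (by positivity), div_pow,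
      Real.sq_sqrt (by norm_num : (5:ℝ) ≥ 0), Real.sq_sqrt (by norm_num : (2:ℝ) ≥ 0)]
  rw [hcoef]
  have habs : ‖(starRingEnd ℂ) (σ 0) ^ 4 * (starRingEnd ℂ) (σ 1)
      + (starRingEnd ℂ) (σ 0) * (starRingEnd ℂ) (σ 1) ^ 4‖ ≤ A^4*B + A*B^4 := by
    calc ‖_‖ ≤ ‖(starRingEnd ℂ) (σ 0) ^ 4 * (starRingEnd ℂ) (σ 1)‖
        + ‖(starRingEnd ℂ) (σ 0) * (starRingEnd ℂ) (σ 1) ^ 4‖ :=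
          norm_add_le _ _
      _ = A^4*B + A*B^4 := by
          simp [norm_mul, norm_pow, Complex.norm_conj, hA, hB]
  have h2 : ‖(starRingEnd ℂ) (σ 0) ^ 4 * (starRingEnd ℂ) (σ 1)
      + (starRingEnd ℂ) (σ 0) * (starRingEnd ℂ) (σ 1) ^ 4‖ ^ 2 ≤ (A^4*B + A*B^4)^2 :=
    pow_le_pow_left₀ (norm_nonneg _) habs 2
  have h3 := tbp_key2 A B hA0 hB0 hσ
  linarith

lemma tbp_bloch_val0 : bloch (Real.pi/2) 0 0 = ((Real.sqrt 2 / 2 : ℝ) : ℂ) := by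
  have hc : Real.cos (Real.pi/2/2) = Real.sqrt 2 / 2 := by
    rw [show Real.pi/2/2 = Real.pi/4 by ring]; exact Real.cos_pi_div_four
  simp only [bloch, if_pos rfl]
  exact congrArg Complex.ofReal hc

lemma tbp_bloch_val1 : bloch (Real.pi/2) 0 1 = ((Real.sqrt 2 / 2 : ℝ) : ℂ) := by
  have hs : Real.sin (Real.pi/2/2) = Real.sqrt 2 / 2 := by
    rw [show Real.pi/2/2 = Real.pi/4 by ring]; exact Real.sin_pi_div_four
  simp only [bloch]
  rw [if_neg (by decide : ¬(1:Fin 2) = 0)]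
  rw [show ((0:ℝ):ℂ) = 0 from Complex.ofReal_zero, mul_zero, Complex.exp_zero, one_mul]
  exact congrArg Complex.ofReal hs

lemma tbp_bloch_eq :
    ‖overlap (symmPow 5 (bloch (Real.pi/2) 0)) trigonalBipyramidState‖ ^ 2 = 5 / 16 := by
  rw [tbp_overlap_formula, tbp_bloch_val0, tbp_bloch_val1, Complex.conj_ofReal]
  have hz : (((Real.sqrt 2/2:ℝ):ℂ)^4 * ((Real.sqrt 2/2:ℝ):ℂ)
      + ((Real.sqrt 2/2:ℝ):ℂ) * ((Real.sqrt 2/2:ℝ):ℂ)^4)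
      = (((Real.sqrt 2/2)^4*(Real.sqrt 2/2)+(Real.sqrt 2/2)*(Real.sqrt 2/2)^4 : ℝ):ℂ) := by
    push_cast; ring
  rw [hz, ← Complex.ofReal_mul, Complex.norm_real, Real.norm_eq_abs, abs_of_nonneg (by positivity)]
  have hs2 : Real.sqrt 2 ^ 2 = 2 := Real.sq_sqrt (by norm_num)
  have hs5 : Real.sqrt 5 ^ 2 = 5 := Real.sq_sqrt (by norm_num)
  have hs10 : Real.sqrt 2 ^ 10 = 32 := by
    rw [show (10:ℕ) = 2*5 from rfl, pow_mul, hs2]; norm_num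
  have hr : Real.sqrt 5 / Real.sqrt 2 * ((Real.sqrt 2/2)^4*(Real.sqrt 2/2)
      + (Real.sqrt 2/2)*(Real.sqrt 2/2)^4)
      = Real.sqrt 5 / Real.sqrt 2 * (Real.sqrt 2^5/16) := by ring
  rw [hr]
  have hq : (Real.sqrt 5 / Real.sqrt 2 * (Real.sqrt 2^5/16))^2
      = Real.sqrt 5^2 * Real.sqrt 2^10 / (Real.sqrt 2^2 * 256) := by ring
  rw [hq, hs5, hs10, hs2]; norm_num

lemma tbp_bloch_unit : qubitUnit (bloch (Real.pi/2) 0) := by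
  unfold qubitUnit
  rw [tbp_bloch_val0, tbp_bloch_val1, Complex.norm_real, Real.norm_eq_abs, abs_of_nonneg (by positivity)]
  rw [div_pow, Real.sq_sqrt (by norm_num : (2:ℝ) >= 0)]
  norm_num

theorem trigonal_bipyramid_state_geometric_measure :
    (∀ σ : Fin 2 → ℂ, qubitUnit σ →
      ‖overlap (symmPow 5 σ) trigonalBipyramidState‖ ^ 2 ≤ 5 / 16) ∧
    ‖overlap (symmPow 5 (bloch (Real.pi/2) 0)) trigonalBipyramidState‖ ^ 2 = 5 / 16 ∧
    - Real.logb 2 (sSup {a : ℝ | ∃ σ : Fin 2 → ℂ, qubitUnit σ ∧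
        a = ‖overlap (symmPow 5 σ) trigonalBipyramidState‖ ^ 2})
      = Real.logb 2 (16 / 5) := by
  refine ⟨fun σ hσ => tbp_bound σ hσ, tbp_bloch_eq, ?_⟩
  have hmem : (5/16 : ℝ) ∈ {a : ℝ | ∃ σ : Fin 2 → ℂ, qubitUnit σ ∧
      a = ‖overlap (symmPow 5 σ) trigonalBipyramidState‖ ^ 2} :=
    ⟨bloch (Real.pi/2) 0, tbp_bloch_unit, tbp_bloch_eq.symm⟩
  have hsup : sSup {a : ℝ | ∃ σ : Fin 2 → ℂ, qubitUnit σ ∧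
      a = ‖overlap (symmPow 5 σ) trigonalBipyramidState‖ ^ 2} = 5/16 := by
    apply le_antisymm
    · apply csSup_le ⟨_, hmem⟩
      rintro a ⟨σ, hσ, rfl⟩
      exact tbp_bound σ hσ
    · apply le_csSup
      · exact ⟨5/16, by rintro a ⟨σ, hσ, rfl⟩; exact tbp_bound σ hσ⟩
      · exact hmem
  rw [hsup, show (16/5 : ℝ) = (5/16)⁻¹ by norm_num, Real.logb_inv]
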